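/- For every k ∈ {7, 16, 20, 22} and every m ≥ 2, the graph G on vertex set {1,…,m} whose edge set consists of all pairs {i,j} with 2 ≤ i < j ≤ m together with the single edge {1,2} is k-equivalent to the complete graph K_m, i.e., 𝔞_k^G = 𝔞_k^{K_m}. -/

import Mathlib

open Matrix DirectSum

attribute [local instance 100] LieRing.ofAssociativeRing

noncomputable section

/-- The identity Pauli matrix `I`. -/
def PauliI : Matrix (Fin 2) (Fin 2) ℂ := 1

/-- The Pauli matrix `X`. -/
def PauliX : Matrix (Fin 2) (Fin 2) ℂ := !![0, 1; 1, 0]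

/-- The Pauli matrix `Y`. -/
def PauliY : Matrix (Fin 2) (Fin 2) ℂ := !![0, -Complex.I; Complex.I, 0]

/-- The Pauli matrix `Z`. -/
def PauliZ : Matrix (Fin 2) (Fin 2) ℂ := !![1, 0; 0, -1]

/-- The `n`-fold Kronecker product of the 2×2 matrices `A 0, …, A (n-1)`, realized as a
matrix indexed by `Fin n → Fin 2` (a type of cardinality `2^n`). -/
def pauliString {n : ℕ} (A : Fin n → Matrix (Fin 2) (Fin 2) ℂ) :
    Matrix (Fin n → Fin 2) (Fin n → Fin 2) ℂ :=
  Matrix.of fun x y => ∏ k, A k (x k) (y k)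

/-- The Pauli string `A_i B_j` with `A` at site `i`, `B` at site `j`, and identity elsewhere. -/
def twoLocal {n : ℕ} (A B : Matrix (Fin 2) (Fin 2) ℂ) (i j : Fin n) :
    Matrix (Fin n → Fin 2) (Fin n → Fin 2) ℂ :=
  pauliString (fun k => if k = i then A else if k = j then B else PauliI)

/-- The Pauli string `A_i` with `A` at site `i` and identity elsewhere. -/
def oneLocal {n : ℕ} (A : Matrix (Fin 2) (Fin 2) ℂ) (i : Fin n) :
    Matrix (Fin n → Fin 2) (Fin n → Fin 2) ℂ :=
  pauliString (fun k => if k = i then A else PauliI)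

/-- The generating sets `𝒜_k` (a pair `(a, b)` stands for `a ⊗ b`). -/
def genSet : ℕ → Set (Matrix (Fin 2) (Fin 2) ℂ × Matrix (Fin 2) (Fin 2) ℂ)
  | 2 => {(PauliX, PauliY), (PauliY, PauliX)}
  | 4 => {(PauliX, PauliX), (PauliY, PauliY)}
  | 6 => {(PauliX, PauliX), (PauliY, PauliZ), (PauliZ, PauliY)}
  | 7 => {(PauliX, PauliX), (PauliY, PauliY), (PauliZ, PauliZ)}
  | 14 => {(PauliX, PauliX), (PauliY, PauliY), (PauliX, PauliY), (PauliY, PauliX)}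
  | 16 => {(PauliX, PauliY), (PauliY, PauliX), (PauliY, PauliZ), (PauliZ, PauliY)}
  | 20 => {(PauliX, PauliX), (PauliY, PauliY), (PauliY, PauliZ), (PauliZ, PauliY)}
  | 22 => {(PauliX, PauliX), (PauliX, PauliY), (PauliY, PauliX), (PauliX, PauliZ), (PauliZ, PauliX)}
  | _ => ∅

/-- The dynamical Lie algebra `𝔞_k^G`: the smallest real Lie subalgebra of the `2^n × 2^n`
complex matrices containing `i·(a_i · b_j)` for every edge `{i, j}` of `G` and every pair
`(a, b)` with `a ⊗ b ∈ 𝒜_k`. -/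
def dla (k : ℕ) {n : ℕ} (G : SimpleGraph (Fin n)) :
    LieSubalgebra ℝ (Matrix (Fin n → Fin 2) (Fin n → Fin 2) ℂ) :=
  LieSubalgebra.lieSpan ℝ _
    {M | ∃ i j : Fin n, G.Adj i j ∧ ∃ p ∈ genSet k, M = Complex.I • twoLocal p.1 p.2 i j}

/-- The graph on `{1, …, m}` (realized as `Fin m`, vertex `v` being index `v - 1`) whose edges
are all pairs `{i, j}` with `2 ≤ i < j ≤ m`, together with the single edge `{1, 2}`. -/
def completePlusPendant (m : ℕ) : SimpleGraph (Fin m) :=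
  SimpleGraph.fromRel (fun i j => (1 ≤ (i : ℕ) ∧ 1 ≤ (j : ℕ)) ∨ ((i : ℕ) = 0 ∧ (j : ℕ) = 1))


section products
set_option maxHeartbeats 1000000

lemma hXX : PauliX * PauliX = 1 := by
  ext i j; fin_cases i <;> fin_cases j <;>
    simp [PauliX, Matrix.mul_apply, Fin.sum_univ_two, Matrix.one_apply]

lemma hYY : PauliY * PauliY = 1 := by
  ext i j; fin_cases i <;> fin_cases j <;>
    simp [PauliY, Matrix.mul_apply, Fin.sum_univ_two, Matrix.one_apply]

lemma hZZ : PauliZ * PauliZ = 1 := by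
  ext i j; fin_cases i <;> fin_cases j <;>
    simp [PauliZ, Matrix.mul_apply, Fin.sum_univ_two, Matrix.one_apply]

lemma hXY : PauliX * PauliY = Complex.I • PauliZ := by
  ext i j; fin_cases i <;> fin_cases j <;>
    simp [PauliX, PauliY, PauliZ, Matrix.mul_apply, Fin.sum_univ_two]

lemma hYZ : PauliY * PauliZ = Complex.I • PauliX := by
  ext i j; fin_cases i <;> fin_cases j <;>
    simp [PauliX, PauliY, PauliZ, Matrix.mul_apply, Fin.sum_univ_two]

lemma hZX : PauliZ * PauliX = Complex.I • PauliY := by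
  ext i j; fin_cases i <;> fin_cases j <;>
    simp [PauliX, PauliY, PauliZ, Matrix.mul_apply, Fin.sum_univ_two, Complex.ext_iff]

lemma hYXn : PauliY * PauliX = (-Complex.I) • PauliZ := by
  ext i j; fin_cases i <;> fin_cases j <;>
    simp [PauliX, PauliY, PauliZ, Matrix.mul_apply, Fin.sum_univ_two, Complex.ext_iff]

lemma hZYn : PauliZ * PauliY = (-Complex.I) • PauliX := by
  ext i j; fin_cases i <;> fin_cases j <;>
    simp [PauliX, PauliY, PauliZ, Matrix.mul_apply, Fin.sum_univ_two, Complex.ext_iff]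

lemma hXZn : PauliX * PauliZ = (-Complex.I) • PauliY := by
  ext i j; fin_cases i <;> fin_cases j <;>
    simp [PauliX, PauliY, PauliZ, Matrix.mul_apply, Fin.sum_univ_two, Complex.ext_iff]

lemma hYX : PauliY * PauliX = -(Complex.I • PauliZ) := by
  rw [hYXn, neg_smul]

lemma hZY : PauliZ * PauliY = -(Complex.I • PauliX) := by
  rw [hZYn, neg_smul]

lemma hXZ : PauliX * PauliZ = -(Complex.I • PauliY) := by
  rw [hXZn, neg_smul]

lemma hXYn : PauliX * PauliY = -((-Complex.I) • PauliZ) := by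
  rw [hXY, neg_smul, neg_neg]

lemma hYZn : PauliY * PauliZ = -((-Complex.I) • PauliX) := by
  rw [hYZ, neg_smul, neg_neg]

lemma hZXn : PauliZ * PauliX = -((-Complex.I) • PauliY) := by
  rw [hZX, neg_smul, neg_neg]

end products

lemma pauliString_mul {n : ℕ} (A B : Fin n → Matrix (Fin 2) (Fin 2) ℂ) :
    pauliString A * pauliString B = pauliString (fun k => A k * B k) := by
  ext x y
  simp only [pauliString, Matrix.mul_apply, Matrix.of_apply]
  rw [Finset.prod_univ_sum, Fintype.piFinset_univ]
  exact Finset.sum_congr rfl fun z _ => (Finset.prod_mul_distrib).symm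

/-- Three-local Pauli string helper. -/
def PS3 {n : ℕ} (a b c : Fin n) (A B C : Matrix (Fin 2) (Fin 2) ℂ) :
    Matrix (Fin n → Fin 2) (Fin n → Fin 2) ℂ :=
  pauliString (fun k => if k = a then A else if k = b then B else if k = c then C else 1)

lemma PS3_mul {n : ℕ} (a b c : Fin n) (A B C A' B' C' : Matrix (Fin 2) (Fin 2) ℂ) :
    PS3 a b c A B C * PS3 a b c A' B' C' = PS3 a b c (A * A') (B * B') (C * C') := by
  unfold PS3
  rw [pauliString_mul]
  refine congrArg pauliString ?_
  funext k
  split_ifs <;> simp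

lemma pauliString_smul_site {n : ℕ} (f : Fin n → Matrix (Fin 2) (Fin 2) ℂ) (s : Fin n)
    (γ : ℂ) (g : Fin n → Matrix (Fin 2) (Fin 2) ℂ)
    (hs : f s = γ • g s) (ho : ∀ k, k ≠ s → f k = g k) :
    pauliString f = γ • pauliString g := by
  ext x y
  simp only [pauliString, Matrix.of_apply, Matrix.smul_apply, smul_eq_mul]
  rw [← Finset.mul_prod_erase Finset.univ _ (Finset.mem_univ s),
    ← Finset.mul_prod_erase Finset.univ (fun k => g k (x k) (y k)) (Finset.mem_univ s)]
  rw [hs]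
  have h2 : (∏ k ∈ Finset.univ.erase s, f k (x k) (y k))
      = ∏ k ∈ Finset.univ.erase s, g k (x k) (y k) :=
    Finset.prod_congr rfl fun k hk => by rw [ho k (Finset.ne_of_mem_erase hk)]
  rw [h2]
  simp only [Matrix.smul_apply, smul_eq_mul]
  ring

lemma PS3_smulA {n : ℕ} (a b c : Fin n) (γ : ℂ) (A B C : Matrix (Fin 2) (Fin 2) ℂ) :
    PS3 a b c (γ • A) B C = γ • PS3 a b c A B C := by
  refine pauliString_smul_site _ a γ _ (by simp) (fun k hk => by simp [hk])

lemma PS3_smulB {n : ℕ} (a b c : Fin n) (hba : b ≠ a) (γ : ℂ)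
    (A B C : Matrix (Fin 2) (Fin 2) ℂ) :
    PS3 a b c A (γ • B) C = γ • PS3 a b c A B C := by
  refine pauliString_smul_site _ b γ _ (by simp [hba]) (fun k hk => by simp [hk])

lemma PS3_smulC {n : ℕ} (a b c : Fin n) (hca : c ≠ a) (hcb : c ≠ b) (γ : ℂ)
    (A B C : Matrix (Fin 2) (Fin 2) ℂ) :
    PS3 a b c A B (γ • C) = γ • PS3 a b c A B C := by
  refine pauliString_smul_site _ c γ _ (by simp [hca, hcb]) (fun k hk => by simp [hk])

section mem

variable {n : ℕ} {S : LieSubalgebra ℝ (Matrix (Fin n → Fin 2) (Fin n → Fin 2) ℂ)}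
variable {a b c : Fin n}

lemma mem_of_bracket_eq {P Q R : Matrix (Fin n → Fin 2) (Fin n → Fin 2) ℂ} {γ : ℂ} (d : ℝ)
    (hd : (d : ℂ) * (2 * γ) = Complex.I)
    (hbr : ⁅P, Q⁆ = (2 * γ) • R)
    (hP : Complex.I • P ∈ S) (hQ : Complex.I • Q ∈ S) :
    Complex.I • R ∈ S := by
  have h1 : ⁅Complex.I • P, Complex.I • Q⁆ ∈ S := S.lie_mem hP hQ
  have h2 : Complex.I • R = (-d : ℝ) • ⁅Complex.I • P, Complex.I • Q⁆ := by
    rw [smul_lie, lie_smul, smul_smul, Complex.I_mul_I, hbr, smul_smul, ← smul_assoc]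
    congr 1
    rw [Complex.real_smul, ← hd]
    push_cast
    ring
  rw [h2]
  exact S.smul_mem _ h1

lemma memA (hba : b ≠ a) (hca : c ≠ a) (hcb : c ≠ b)
    {A₁ B₁ C₁ A₂ B₂ C₂ A₃ B₃ C₃ : Matrix (Fin 2) (Fin 2) ℂ} {γ : ℂ} (d : ℝ)
    (hd : (d : ℂ) * (2 * γ) = Complex.I)
    (h1 : A₁ * A₂ = γ • A₃) (h1' : A₂ * A₁ = -(γ • A₃))
    (h2 : B₂ * B₁ = B₁ * B₂) (h2' : B₁ * B₂ = B₃)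
    (h3 : C₂ * C₁ = C₁ * C₂) (h3' : C₁ * C₂ = C₃)
    (hP : Complex.I • PS3 a b c A₁ B₁ C₁ ∈ S)
    (hQ : Complex.I • PS3 a b c A₂ B₂ C₂ ∈ S) :
    Complex.I • PS3 a b c A₃ B₃ C₃ ∈ S := by
  refine mem_of_bracket_eq d hd ?_ hP hQ
  rw [Ring.lie_def, PS3_mul, PS3_mul, h1, h2, h2', h3, h3', h1']
  rw [show -(γ • A₃) = (-γ) • A₃ by rw [neg_smul], PS3_smulA, PS3_smulA, ← sub_smul]
  congr 1
  ring

lemma memB (hba : b ≠ a) (hca : c ≠ a) (hcb : c ≠ b)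
    {A₁ B₁ C₁ A₂ B₂ C₂ A₃ B₃ C₃ : Matrix (Fin 2) (Fin 2) ℂ} {γ : ℂ} (d : ℝ)
    (hd : (d : ℂ) * (2 * γ) = Complex.I)
    (h1 : A₂ * A₁ = A₁ * A₂) (h1' : A₁ * A₂ = A₃)
    (h2 : B₁ * B₂ = γ • B₃) (h2' : B₂ * B₁ = -(γ • B₃))
    (h3 : C₂ * C₁ = C₁ * C₂) (h3' : C₁ * C₂ = C₃)
    (hP : Complex.I • PS3 a b c A₁ B₁ C₁ ∈ S)
    (hQ : Complex.I • PS3 a b c A₂ B₂ C₂ ∈ S) :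
    Complex.I • PS3 a b c A₃ B₃ C₃ ∈ S := by
  refine mem_of_bracket_eq d hd ?_ hP hQ
  rw [Ring.lie_def, PS3_mul, PS3_mul, h2, h1, h1', h3, h3', h2']
  rw [show -(γ • B₃) = (-γ) • B₃ by rw [neg_smul], PS3_smulB a b c hba, PS3_smulB a b c hba,
    ← sub_smul]
  congr 1
  ring

lemma memC (hba : b ≠ a) (hca : c ≠ a) (hcb : c ≠ b)
    {A₁ B₁ C₁ A₂ B₂ C₂ A₃ B₃ C₃ : Matrix (Fin 2) (Fin 2) ℂ} {γ : ℂ} (d : ℝ)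
    (hd : (d : ℂ) * (2 * γ) = Complex.I)
    (h1 : A₂ * A₁ = A₁ * A₂) (h1' : A₁ * A₂ = A₃)
    (h2 : B₂ * B₁ = B₁ * B₂) (h2' : B₁ * B₂ = B₃)
    (h3 : C₁ * C₂ = γ • C₃) (h3' : C₂ * C₁ = -(γ • C₃))
    (hP : Complex.I • PS3 a b c A₁ B₁ C₁ ∈ S)
    (hQ : Complex.I • PS3 a b c A₂ B₂ C₂ ∈ S) :
    Complex.I • PS3 a b c A₃ B₃ C₃ ∈ S := by
  refine mem_of_bracket_eq d hd ?_ hP hQ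
  rw [Ring.lie_def, PS3_mul, PS3_mul, h3, h1, h1', h2, h2', h3']
  rw [show -(γ • C₃) = (-γ) • C₃ by rw [neg_smul], PS3_smulC a b c hca hcb,
    PS3_smulC a b c hca hcb, ← sub_smul]
  congr 1
  ring

end mem

section conversions

variable {n : ℕ} (a b c : Fin n)

lemma twoLocal_eq_PS3_ab (A B : Matrix (Fin 2) (Fin 2) ℂ) :
    twoLocal A B a b = PS3 a b c A B 1 := by
  refine congrArg pauliString ?_
  funext k
  unfold PauliI
  split_ifs <;> rfl

lemma twoLocal_eq_PS3_bc (hab : a ≠ b) (hac : a ≠ c) (B C : Matrix (Fin 2) (Fin 2) ℂ) :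
    twoLocal B C b c = PS3 a b c 1 B C := by
  refine congrArg pauliString ?_
  funext k
  unfold PauliI
  by_cases h : k = a
  · subst h
    rw [if_neg hab, if_neg hac, if_pos rfl]
  · rw [if_neg h]

lemma twoLocal_eq_PS3_ac (hba : b ≠ a) (hbc : b ≠ c) (A C : Matrix (Fin 2) (Fin 2) ℂ) :
    twoLocal A C a c = PS3 a b c A 1 C := by
  refine congrArg pauliString ?_
  funext k
  unfold PauliI
  by_cases h : k = a
  · subst h
    rw [if_pos rfl, if_pos rfl]
  · rw [if_neg h, if_neg h]
    by_cases h2 : k = b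
    · subst h2
      rw [if_neg hbc, if_pos rfl]
    · rw [if_neg h2]

lemma twoLocal_swap {i j : Fin n} (hij : i ≠ j) (A B : Matrix (Fin 2) (Fin 2) ℂ) :
    twoLocal A B i j = twoLocal B A j i := by
  refine congrArg pauliString ?_
  funext k
  by_cases h : k = i
  · subst h
    rw [if_pos rfl, if_neg hij, if_pos rfl]
  · rw [if_neg h]
    by_cases h2 : k = j
    · subst h2
      rw [if_pos rfl, if_pos rfl]
    · rw [if_neg h2, if_neg h2, if_neg h]

end conversions

lemma key7 {n : ℕ} {S : LieSubalgebra ℝ (Matrix (Fin n → Fin 2) (Fin n → Fin 2) ℂ)}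
    (a b c : Fin n) (hab : a ≠ b) (hac : a ≠ c) (hbc : b ≠ c)
    (hGab : ∀ p ∈ genSet 7, Complex.I • twoLocal p.1 p.2 a b ∈ S)
    (hGbc : ∀ p ∈ genSet 7, Complex.I • twoLocal p.1 p.2 b c ∈ S) :
    ∀ p ∈ genSet 7, Complex.I • twoLocal p.1 p.2 a c ∈ S := by
  have hba := hab.symm
  have hca := hac.symm
  have hcb := hbc.symm
  have eIXX : Complex.I • PS3 a b c 1 PauliX PauliX ∈ S := by
    rw [← twoLocal_eq_PS3_bc a b c hab hac]
    exact hGbc (PauliX, PauliX) (by simp [genSet])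
  have eIYY : Complex.I • PS3 a b c 1 PauliY PauliY ∈ S := by
    rw [← twoLocal_eq_PS3_bc a b c hab hac]
    exact hGbc (PauliY, PauliY) (by simp [genSet])
  have eIZZ : Complex.I • PS3 a b c 1 PauliZ PauliZ ∈ S := by
    rw [← twoLocal_eq_PS3_bc a b c hab hac]
    exact hGbc (PauliZ, PauliZ) (by simp [genSet])
  have eXXI : Complex.I • PS3 a b c PauliX PauliX 1 ∈ S := by
    rw [← twoLocal_eq_PS3_ab a b c]
    exact hGab (PauliX, PauliX) (by simp [genSet])
  have eYYI : Complex.I • PS3 a b c PauliY PauliY 1 ∈ S := by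
    rw [← twoLocal_eq_PS3_ab a b c]
    exact hGab (PauliY, PauliY) (by simp [genSet])
  have eZZI : Complex.I • PS3 a b c PauliZ PauliZ 1 ∈ S := by
    rw [← twoLocal_eq_PS3_ab a b c]
    exact hGab (PauliZ, PauliZ) (by simp [genSet])
  have eXYZ : Complex.I • PS3 a b c PauliX PauliY PauliZ ∈ S :=
    memB hba hca hcb (1/2 : ℝ) (by push_cast; ring) ((mul_one _).trans (one_mul _).symm) (one_mul _) hZX hXZ ((one_mul _).trans (mul_one _).symm) (mul_one _) eIZZ eXXI
  have eXIX : Complex.I • PS3 a b c PauliX (1 : Matrix (Fin 2) (Fin 2) ℂ) PauliX ∈ S :=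
    memC hba hca hcb (1/2 : ℝ) (by push_cast; ring) ((mul_one _).trans (one_mul _).symm) (one_mul _) rfl hYY hYZ hZY eIYY eXYZ
  have eYXZ : Complex.I • PS3 a b c PauliY PauliX PauliZ ∈ S :=
    memB hba hca hcb (-1/2 : ℝ) (by push_cast; ring) ((mul_one _).trans (one_mul _).symm) (one_mul _) hZYn hYZn ((one_mul _).trans (mul_one _).symm) (mul_one _) eIZZ eYYI
  have eYIY : Complex.I • PS3 a b c PauliY (1 : Matrix (Fin 2) (Fin 2) ℂ) PauliY ∈ S :=
    memC hba hca hcb (-1/2 : ℝ) (by push_cast; ring) ((mul_one _).trans (one_mul _).symm) (one_mul _) rfl hXX hXZn hZXn eIXX eYXZ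
  have eZXY : Complex.I • PS3 a b c PauliZ PauliX PauliY ∈ S :=
    memB hba hca hcb (1/2 : ℝ) (by push_cast; ring) ((mul_one _).trans (one_mul _).symm) (one_mul _) hYZ hZY ((one_mul _).trans (mul_one _).symm) (mul_one _) eIYY eZZI
  have eZIZ : Complex.I • PS3 a b c PauliZ (1 : Matrix (Fin 2) (Fin 2) ℂ) PauliZ ∈ S :=
    memC hba hca hcb (1/2 : ℝ) (by push_cast; ring) ((mul_one _).trans (one_mul _).symm) (one_mul _) rfl hXX hXY hYX eIXX eZXY
  intro p hp
  simp only [genSet, Set.mem_insert_iff, Set.mem_singleton_iff] at hp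
  rcases hp with rfl | rfl | rfl <;> rw [twoLocal_eq_PS3_ac a b c hba hbc]
  exacts [eXIX, eYIY, eZIZ]

lemma key16 {n : ℕ} {S : LieSubalgebra ℝ (Matrix (Fin n → Fin 2) (Fin n → Fin 2) ℂ)}
    (a b c : Fin n) (hab : a ≠ b) (hac : a ≠ c) (hbc : b ≠ c)
    (hGab : ∀ p ∈ genSet 16, Complex.I • twoLocal p.1 p.2 a b ∈ S)
    (hGbc : ∀ p ∈ genSet 16, Complex.I • twoLocal p.1 p.2 b c ∈ S) :
    ∀ p ∈ genSet 16, Complex.I • twoLocal p.1 p.2 a c ∈ S := by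
  have hba := hab.symm
  have hca := hac.symm
  have hcb := hbc.symm
  have eIXY : Complex.I • PS3 a b c 1 PauliX PauliY ∈ S := by
    rw [← twoLocal_eq_PS3_bc a b c hab hac]
    exact hGbc (PauliX, PauliY) (by simp [genSet])
  have eIYX : Complex.I • PS3 a b c 1 PauliY PauliX ∈ S := by
    rw [← twoLocal_eq_PS3_bc a b c hab hac]
    exact hGbc (PauliY, PauliX) (by simp [genSet])
  have eIYZ : Complex.I • PS3 a b c 1 PauliY PauliZ ∈ S := by
    rw [← twoLocal_eq_PS3_bc a b c hab hac]
    exact hGbc (PauliY, PauliZ) (by simp [genSet])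
  have eIZY : Complex.I • PS3 a b c 1 PauliZ PauliY ∈ S := by
    rw [← twoLocal_eq_PS3_bc a b c hab hac]
    exact hGbc (PauliZ, PauliY) (by simp [genSet])
  have eXYI : Complex.I • PS3 a b c PauliX PauliY 1 ∈ S := by
    rw [← twoLocal_eq_PS3_ab a b c]
    exact hGab (PauliX, PauliY) (by simp [genSet])
  have eYXI : Complex.I • PS3 a b c PauliY PauliX 1 ∈ S := by
    rw [← twoLocal_eq_PS3_ab a b c]
    exact hGab (PauliY, PauliX) (by simp [genSet])
  have eYZI : Complex.I • PS3 a b c PauliY PauliZ 1 ∈ S := by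
    rw [← twoLocal_eq_PS3_ab a b c]
    exact hGab (PauliY, PauliZ) (by simp [genSet])
  have eZYI : Complex.I • PS3 a b c PauliZ PauliY 1 ∈ S := by
    rw [← twoLocal_eq_PS3_ab a b c]
    exact hGab (PauliZ, PauliY) (by simp [genSet])
  have eZXY : Complex.I • PS3 a b c PauliZ PauliX PauliY ∈ S :=
    memB hba hca hcb (-1/2 : ℝ) (by push_cast; ring) ((mul_one _).trans (one_mul _).symm) (one_mul _) hZYn hYZn ((one_mul _).trans (mul_one _).symm) (mul_one _) eIZY eZYI
  have eXIY : Complex.I • PS3 a b c PauliX (1 : Matrix (Fin 2) (Fin 2) ℂ) PauliY ∈ S :=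
    memA hba hca hcb (1/2 : ℝ) (by push_cast; ring) hYZ hZY rfl hXX ((mul_one _).trans (one_mul _).symm) (one_mul _) eYXI eZXY
  have eYXZ : Complex.I • PS3 a b c PauliY PauliX PauliZ ∈ S :=
    memB hba hca hcb (1/2 : ℝ) (by push_cast; ring) ((mul_one _).trans (one_mul _).symm) (one_mul _) hYZ hZY ((one_mul _).trans (mul_one _).symm) (mul_one _) eIYZ eYZI
  have eYIX : Complex.I • PS3 a b c PauliY (1 : Matrix (Fin 2) (Fin 2) ℂ) PauliX ∈ S :=
    memC hba hca hcb (1/2 : ℝ) (by push_cast; ring) ((mul_one _).trans (one_mul _).symm) (one_mul _) rfl hXX hYZ hZY eIXY eYXZ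
  have eYXX : Complex.I • PS3 a b c PauliY PauliX PauliX ∈ S :=
    memB hba hca hcb (1/2 : ℝ) (by push_cast; ring) ((mul_one _).trans (one_mul _).symm) (one_mul _) hYZ hZY ((one_mul _).trans (mul_one _).symm) (mul_one _) eIYX eYZI
  have eYIZ : Complex.I • PS3 a b c PauliY (1 : Matrix (Fin 2) (Fin 2) ℂ) PauliZ ∈ S :=
    memC hba hca hcb (-1/2 : ℝ) (by push_cast; ring) ((mul_one _).trans (one_mul _).symm) (one_mul _) rfl hXX hYXn hXYn eIXY eYXX
  have eXXY : Complex.I • PS3 a b c PauliX PauliX PauliY ∈ S :=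
    memB hba hca hcb (-1/2 : ℝ) (by push_cast; ring) ((mul_one _).trans (one_mul _).symm) (one_mul _) hZYn hYZn ((one_mul _).trans (mul_one _).symm) (mul_one _) eIZY eXYI
  have eZIY : Complex.I • PS3 a b c PauliZ (1 : Matrix (Fin 2) (Fin 2) ℂ) PauliY ∈ S :=
    memA hba hca hcb (1/2 : ℝ) (by push_cast; ring) hXY hYX rfl hXX ((one_mul _).trans (mul_one _).symm) (mul_one _) eXXY eYXI
  intro p hp
  simp only [genSet, Set.mem_insert_iff, Set.mem_singleton_iff] at hp
  rcases hp with rfl | rfl | rfl | rfl <;> rw [twoLocal_eq_PS3_ac a b c hba hbc]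
  exacts [eXIY, eYIX, eYIZ, eZIY]

lemma key20 {n : ℕ} {S : LieSubalgebra ℝ (Matrix (Fin n → Fin 2) (Fin n → Fin 2) ℂ)}
    (a b c : Fin n) (hab : a ≠ b) (hac : a ≠ c) (hbc : b ≠ c)
    (hGab : ∀ p ∈ genSet 20, Complex.I • twoLocal p.1 p.2 a b ∈ S)
    (hGbc : ∀ p ∈ genSet 20, Complex.I • twoLocal p.1 p.2 b c ∈ S) :
    ∀ p ∈ genSet 20, Complex.I • twoLocal p.1 p.2 a c ∈ S := by
  have hba := hab.symm
  have hca := hac.symm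
  have hcb := hbc.symm
  have eIXX : Complex.I • PS3 a b c 1 PauliX PauliX ∈ S := by
    rw [← twoLocal_eq_PS3_bc a b c hab hac]
    exact hGbc (PauliX, PauliX) (by simp [genSet])
  have eIYY : Complex.I • PS3 a b c 1 PauliY PauliY ∈ S := by
    rw [← twoLocal_eq_PS3_bc a b c hab hac]
    exact hGbc (PauliY, PauliY) (by simp [genSet])
  have eIYZ : Complex.I • PS3 a b c 1 PauliY PauliZ ∈ S := by
    rw [← twoLocal_eq_PS3_bc a b c hab hac]
    exact hGbc (PauliY, PauliZ) (by simp [genSet])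
  have eIZY : Complex.I • PS3 a b c 1 PauliZ PauliY ∈ S := by
    rw [← twoLocal_eq_PS3_bc a b c hab hac]
    exact hGbc (PauliZ, PauliY) (by simp [genSet])
  have eXXI : Complex.I • PS3 a b c PauliX PauliX 1 ∈ S := by
    rw [← twoLocal_eq_PS3_ab a b c]
    exact hGab (PauliX, PauliX) (by simp [genSet])
  have eYYI : Complex.I • PS3 a b c PauliY PauliY 1 ∈ S := by
    rw [← twoLocal_eq_PS3_ab a b c]
    exact hGab (PauliY, PauliY) (by simp [genSet])
  have eYZI : Complex.I • PS3 a b c PauliY PauliZ 1 ∈ S := by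
    rw [← twoLocal_eq_PS3_ab a b c]
    exact hGab (PauliY, PauliZ) (by simp [genSet])
  have eZYI : Complex.I • PS3 a b c PauliZ PauliY 1 ∈ S := by
    rw [← twoLocal_eq_PS3_ab a b c]
    exact hGab (PauliZ, PauliY) (by simp [genSet])
  have eXYY : Complex.I • PS3 a b c PauliX PauliY PauliY ∈ S :=
    memB hba hca hcb (1/2 : ℝ) (by push_cast; ring) ((mul_one _).trans (one_mul _).symm) (one_mul _) hZX hXZ ((one_mul _).trans (mul_one _).symm) (mul_one _) eIZY eXXI
  have eXIX : Complex.I • PS3 a b c PauliX (1 : Matrix (Fin 2) (Fin 2) ℂ) PauliX ∈ S :=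
    memC hba hca hcb (-1/2 : ℝ) (by push_cast; ring) ((mul_one _).trans (one_mul _).symm) (one_mul _) rfl hYY hZYn hYZn eIYZ eXYY
  have eYXZ : Complex.I • PS3 a b c PauliY PauliX PauliZ ∈ S :=
    memB hba hca hcb (1/2 : ℝ) (by push_cast; ring) ((mul_one _).trans (one_mul _).symm) (one_mul _) hYZ hZY ((one_mul _).trans (mul_one _).symm) (mul_one _) eIYZ eYZI
  have eYIY : Complex.I • PS3 a b c PauliY (1 : Matrix (Fin 2) (Fin 2) ℂ) PauliY ∈ S :=
    memC hba hca hcb (-1/2 : ℝ) (by push_cast; ring) ((mul_one _).trans (one_mul _).symm) (one_mul _) rfl hXX hXZn hZXn eIXX eYXZ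
  have eYXY : Complex.I • PS3 a b c PauliY PauliX PauliY ∈ S :=
    memB hba hca hcb (1/2 : ℝ) (by push_cast; ring) ((mul_one _).trans (one_mul _).symm) (one_mul _) hYZ hZY ((one_mul _).trans (mul_one _).symm) (mul_one _) eIYY eYZI
  have eYIZ : Complex.I • PS3 a b c PauliY (1 : Matrix (Fin 2) (Fin 2) ℂ) PauliZ ∈ S :=
    memC hba hca hcb (1/2 : ℝ) (by push_cast; ring) ((mul_one _).trans (one_mul _).symm) (one_mul _) rfl hXX hXY hYX eIXX eYXY
  have eZIY : Complex.I • PS3 a b c PauliZ (1 : Matrix (Fin 2) (Fin 2) ℂ) PauliY ∈ S :=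
    memA hba hca hcb (1/2 : ℝ) (by push_cast; ring) hXY hYX rfl hXX ((mul_one _).trans (one_mul _).symm) (one_mul _) eXXI eYXY
  intro p hp
  simp only [genSet, Set.mem_insert_iff, Set.mem_singleton_iff] at hp
  rcases hp with rfl | rfl | rfl | rfl <;> rw [twoLocal_eq_PS3_ac a b c hba hbc]
  exacts [eXIX, eYIY, eYIZ, eZIY]

lemma key22 {n : ℕ} {S : LieSubalgebra ℝ (Matrix (Fin n → Fin 2) (Fin n → Fin 2) ℂ)}
    (a b c : Fin n) (hab : a ≠ b) (hac : a ≠ c) (hbc : b ≠ c)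
    (hGab : ∀ p ∈ genSet 22, Complex.I • twoLocal p.1 p.2 a b ∈ S)
    (hGbc : ∀ p ∈ genSet 22, Complex.I • twoLocal p.1 p.2 b c ∈ S) :
    ∀ p ∈ genSet 22, Complex.I • twoLocal p.1 p.2 a c ∈ S := by
  have hba := hab.symm
  have hca := hac.symm
  have hcb := hbc.symm
  have eIXX : Complex.I • PS3 a b c 1 PauliX PauliX ∈ S := by
    rw [← twoLocal_eq_PS3_bc a b c hab hac]
    exact hGbc (PauliX, PauliX) (by simp [genSet])
  have eIXY : Complex.I • PS3 a b c 1 PauliX PauliY ∈ S := by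
    rw [← twoLocal_eq_PS3_bc a b c hab hac]
    exact hGbc (PauliX, PauliY) (by simp [genSet])
  have eIXZ : Complex.I • PS3 a b c 1 PauliX PauliZ ∈ S := by
    rw [← twoLocal_eq_PS3_bc a b c hab hac]
    exact hGbc (PauliX, PauliZ) (by simp [genSet])
  have eIYX : Complex.I • PS3 a b c 1 PauliY PauliX ∈ S := by
    rw [← twoLocal_eq_PS3_bc a b c hab hac]
    exact hGbc (PauliY, PauliX) (by simp [genSet])
  have eIZX : Complex.I • PS3 a b c 1 PauliZ PauliX ∈ S := by
    rw [← twoLocal_eq_PS3_bc a b c hab hac]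
    exact hGbc (PauliZ, PauliX) (by simp [genSet])
  have eXXI : Complex.I • PS3 a b c PauliX PauliX 1 ∈ S := by
    rw [← twoLocal_eq_PS3_ab a b c]
    exact hGab (PauliX, PauliX) (by simp [genSet])
  have eXYI : Complex.I • PS3 a b c PauliX PauliY 1 ∈ S := by
    rw [← twoLocal_eq_PS3_ab a b c]
    exact hGab (PauliX, PauliY) (by simp [genSet])
  have eXZI : Complex.I • PS3 a b c PauliX PauliZ 1 ∈ S := by
    rw [← twoLocal_eq_PS3_ab a b c]
    exact hGab (PauliX, PauliZ) (by simp [genSet])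
  have eYXI : Complex.I • PS3 a b c PauliY PauliX 1 ∈ S := by
    rw [← twoLocal_eq_PS3_ab a b c]
    exact hGab (PauliY, PauliX) (by simp [genSet])
  have eZXI : Complex.I • PS3 a b c PauliZ PauliX 1 ∈ S := by
    rw [← twoLocal_eq_PS3_ab a b c]
    exact hGab (PauliZ, PauliX) (by simp [genSet])
  have eIIY : Complex.I • PS3 a b c (1 : Matrix (Fin 2) (Fin 2) ℂ) (1 : Matrix (Fin 2) (Fin 2) ℂ) PauliY ∈ S :=
    memC hba hca hcb (-1/2 : ℝ) (by push_cast; ring) rfl (one_mul 1) rfl hXX hXZn hZXn eIXX eIXZ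
  have eXXX : Complex.I • PS3 a b c PauliX PauliX PauliX ∈ S :=
    memB hba hca hcb (1/2 : ℝ) (by push_cast; ring) ((mul_one _).trans (one_mul _).symm) (one_mul _) hYZ hZY ((one_mul _).trans (mul_one _).symm) (mul_one _) eIYX eXZI
  have eXIZ : Complex.I • PS3 a b c PauliX (1 : Matrix (Fin 2) (Fin 2) ℂ) PauliZ ∈ S :=
    memC hba hca hcb (-1/2 : ℝ) (by push_cast; ring) ((mul_one _).trans (one_mul _).symm) (one_mul _) rfl hXX hYXn hXYn eIXY eXXX
  have eXIX : Complex.I • PS3 a b c PauliX (1 : Matrix (Fin 2) (Fin 2) ℂ) PauliX ∈ S :=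
    memC hba hca hcb (1/2 : ℝ) (by push_cast; ring) ((mul_one _).trans (one_mul _).symm) (one_mul _) rfl (one_mul 1) hYZ hZY eIIY eXIZ
  have eXIY : Complex.I • PS3 a b c PauliX (1 : Matrix (Fin 2) (Fin 2) ℂ) PauliY ∈ S :=
    memC hba hca hcb (1/2 : ℝ) (by push_cast; ring) ((mul_one _).trans (one_mul _).symm) (one_mul _) rfl hXX hZX hXZ eIXZ eXXX
  have eYIX : Complex.I • PS3 a b c PauliY (1 : Matrix (Fin 2) (Fin 2) ℂ) PauliX ∈ S :=
    memA hba hca hcb (-1/2 : ℝ) (by push_cast; ring) hXZn hZXn rfl hXX ((one_mul _).trans (mul_one _).symm) (mul_one _) eXXX eZXI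
  have eZIX : Complex.I • PS3 a b c PauliZ (1 : Matrix (Fin 2) (Fin 2) ℂ) PauliX ∈ S :=
    memA hba hca hcb (1/2 : ℝ) (by push_cast; ring) hXY hYX rfl hXX ((one_mul _).trans (mul_one _).symm) (mul_one _) eXXX eYXI
  intro p hp
  simp only [genSet, Set.mem_insert_iff, Set.mem_singleton_iff] at hp
  rcases hp with rfl | rfl | rfl | rfl | rfl <;> rw [twoLocal_eq_PS3_ac a b c hba hbc]
  exacts [eXIX, eXIY, eYIX, eXIZ, eZIX]

/-- For `k ∈ {7, 16, 20, 22}` and `m ≥ 2`, the complete graph on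
`{2, …, m}` together with the extra edge `{1, 2}` is `k`-equivalent to `K_m`. -/
theorem dla_completePlusPendant_eq_completeGraph
    (m : ℕ) (hm : 2 ≤ m) (k : ℕ) (hk : k ∈ ({7, 16, 20, 22} : Set ℕ)) :
    dla k (completePlusPendant m) = dla k (⊤ : SimpleGraph (Fin m)) := by
  apply le_antisymm
  · rw [dla, LieSubalgebra.lieSpan_le]
    rintro M ⟨i, j, hij, p, hp, rfl⟩
    exact LieSubalgebra.subset_lieSpan ⟨i, j, by simpa using hij.ne, p, hp, rfl⟩
  · rw [dla, LieSubalgebra.lieSpan_le]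
    rintro M ⟨i, j, hij, p, hp, rfl⟩
    rw [SimpleGraph.top_adj] at hij
    simp only [SetLike.mem_coe]
    set G := completePlusPendant m with hG
    have hAdj : ∀ u v : Fin m, u ≠ v → 1 ≤ (u : ℕ) → 1 ≤ (v : ℕ) → G.Adj u v := by
      intro u v h h1 h2
      exact (SimpleGraph.fromRel_adj _ _ _).mpr ⟨h, Or.inl (Or.inl ⟨h1, h2⟩)⟩
    have hAdj0 : ∀ u v : Fin m, (u : ℕ) = 0 → (v : ℕ) = 1 → G.Adj u v := by
      intro u v h0 h1
      refine (SimpleGraph.fromRel_adj _ _ _).mpr ⟨?_, Or.inl (Or.inr ⟨h0, h1⟩)⟩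
      intro h
      rw [h] at h0
      omega
    have hsub : ∀ (u v : Fin m), G.Adj u v → ∀ q ∈ genSet k,
        Complex.I • twoLocal q.1 q.2 u v ∈ dla k G := by
      intro u v huv q hq
      exact LieSubalgebra.subset_lieSpan ⟨u, v, huv, q, hq, rfl⟩
    have hswap : ∀ q ∈ genSet k, (q.2, q.1) ∈ genSet k := by
      rcases hk with rfl | rfl | rfl | rfl <;>
      · intro q hq
        simp only [genSet, Set.mem_insert_iff, Set.mem_singleton_iff] at hq ⊢
        rcases hq with rfl | rfl | rfl | rfl | rfl <;> simp
    have hkey : ∀ (a b c : Fin m), a ≠ b → a ≠ c → b ≠ c →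
        (∀ q ∈ genSet k, Complex.I • twoLocal q.1 q.2 a b ∈ dla k G) →
        (∀ q ∈ genSet k, Complex.I • twoLocal q.1 q.2 b c ∈ dla k G) →
        ∀ q ∈ genSet k, Complex.I • twoLocal q.1 q.2 a c ∈ dla k G := by
      rcases hk with rfl | rfl | rfl | rfl
      · exact fun a b c h1 h2 h3 => key7 a b c h1 h2 h3
      · exact fun a b c h1 h2 h3 => key16 a b c h1 h2 h3
      · exact fun a b c h1 h2 h3 => key20 a b c h1 h2 h3
      · exact fun a b c h1 h2 h3 => key22 a b c h1 h2 h3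
    by_cases hi : 1 ≤ (i : ℕ)
    · by_cases hj : 1 ≤ (j : ℕ)
      · exact hsub i j (hAdj i j hij hi hj) p hp
      · have hj0 : (j : ℕ) = 0 := by omega
        by_cases hi1 : (i : ℕ) = 1
        · rw [twoLocal_swap hij p.1 p.2]
          exact hsub j i (hAdj0 j i hj0 hi1) (p.2, p.1) (hswap p hp)
        · have hi2 : 2 ≤ (i : ℕ) := by omega
          have hb1 : (1 : ℕ) < m := by omega
          set b : Fin m := ⟨1, hb1⟩ with hbdef
          have hjb : j ≠ b := by
            intro h
            rw [h] at hj0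
            simp [hbdef] at hj0
          have hji : j ≠ i := hij.symm
          have hbi : b ≠ i := by
            intro h
            rw [← h] at hi2
            simp [hbdef] at hi2
          rw [twoLocal_swap hij p.1 p.2]
          refine hkey j b i hjb hji hbi ?_ ?_ (p.2, p.1) (hswap p hp)
          · intro q hq
            exact hsub j b (hAdj0 j b hj0 rfl) q hq
          · intro q hq
            exact hsub b i (hAdj b i hbi (by simp [hbdef]) (by omega)) q hq
    · have hi0 : (i : ℕ) = 0 := by omega
      by_cases hj1 : (j : ℕ) = 1
      · exact hsub i j (hAdj0 i j hi0 hj1) p hp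
      · have hj2 : 2 ≤ (j : ℕ) := by
          have hne : (j : ℕ) ≠ 0 := by
            intro h
            exact hij (Fin.val_injective (by omega))
          omega
        have hb1 : (1 : ℕ) < m := by omega
        set b : Fin m := ⟨1, hb1⟩ with hbdef
        have hib : i ≠ b := by
          intro h
          rw [h] at hi0
          simp [hbdef] at hi0
        have hbj : b ≠ j := by
          intro h
          rw [← h] at hj2
          simp [hbdef] at hj2
        refine hkey i b j hib hij hbj ?_ ?_ p hp
        · intro q hq
          exact hsub i b (hAdj0 i b hi0 rfl) q hq
        · intro q hq
          exact hsub b j (hAdj b j hbj (by simp [hbdef]) (by omega)) q hq
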